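/- Binet-type formula for q-Chebyshev polynomials: T_n(x,s,q) = ∑_{k=0}^{⌊n/2⌋} q^{\binom{n-2k}{2}}·[n choose 2k]_q·x^{n-2k}·∏_{j=0}^{k-1}(x² + q^{2j+1}s), where T_n is defined by T_0 = 1, T_1 = x, T_n = (1+q^{n-1})x·T_{n-1} + q^{n-1}s·T_{n-2}. -/

import Mathlib

open Finset

noncomputable section

/-- The polynomial ring `ℤ[q,x,s]`. -/
abbrev R : Type := MvPolynomial (Fin 3) ℤ

def q : R := MvPolynomial.X 0
def x : R := MvPolynomial.X 1
def s : R := MvPolynomial.X 2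

/-- q-Chebyshev polynomials of the first kind:
`T 0 = 1`, `T 1 = x`, `T n = (1+q^(n-1)) x T (n-1) + q^(n-1) s T (n-2)`. -/
def chebT : ℕ → R
  | 0 => 1
  | 1 => x
  | (n + 2) => (1 + q ^ (n + 1)) * x * chebT (n + 1) + q ^ (n + 1) * s * chebT n

/-- q-Chebyshev polynomials of the second kind:
`U 0 = 1`, `U 1 = (1+q)x`, `U n = (1+q^n) x U (n-1) + q^(n-1) s U (n-2)`. -/
def chebU : ℕ → R
  | 0 => 1
  | 1 => (1 + q) * x
  | (n + 2) => (1 + q ^ (n + 2)) * x * chebU (n + 1) + q ^ (n + 1) * s * chebU n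

/-- The Gaussian binomial coefficient `[n choose k]_q` as a polynomial in `q`,
via the Pascal recursion `[n+1, k+1] = [n, k+1] + q^(n-k) [n, k]`. -/
def gbinom : ℕ → ℕ → R
  | _, 0 => 1
  | 0, _ + 1 => 0
  | (n + 1), (k + 1) => gbinom n (k + 1) + q ^ (n - k) * gbinom n k

lemma gbinom_zero (n : ℕ) : gbinom n 0 = 1 := by cases n <;> rfl

lemma gbinom_succ (n k : ℕ) :
    gbinom (n+1) (k+1) = gbinom n (k+1) + q ^ (n-k) * gbinom n k := rfl

lemma gbinom_eq_zero : ∀ {n k : ℕ}, n < k → gbinom n k = 0 := by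
  intro n
  induction n with
  | zero => intro k h; match k, h with | k+1, _ => rfl
  | succ n ih =>
    intro k h
    match k, h with
    | k+1, h => rw [gbinom_succ, ih (by omega), ih (by omega)]; ring

lemma gbinom_self (n : ℕ) : gbinom n n = 1 := by
  induction n with
  | zero => rfl
  | succ n ih => rw [gbinom_succ, ih, gbinom_eq_zero (by omega)]; simp

lemma L12 : ∀ N a b : ℕ, a + b = N →
    ((q^(b+1) - 1) * gbinom (a+b+1) (b+1) = (q^(a+b+1) - 1) * gbinom (a+b) b) ∧
    ((q^(a+1) - 1) * gbinom (a+b+1) b = (q^(a+b+1) - 1) * gbinom (a+b) b) := by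
  intro N
  induction N using Nat.strong_induction_on with
  | _ N ih =>
    intro a b hab
    constructor
    · match a with
      | 0 => simp only [Nat.zero_add]; rw [gbinom_self, gbinom_self]
      | a+1 =>
        have h1 := (ih (a+b) (by omega) a b rfl).1
        have h2 := (ih (a+b) (by omega) a b rfl).2
        rw [show a+1+b+1 = (a+b+1)+1 by omega, gbinom_succ, show (a+b+1)-b = a+1 by omega,
          show a+1+b = a+b+1 by omega]
        linear_combination h1 - h2
    · match b with
      | 0 => rw [gbinom_zero, gbinom_zero]
      | b+1 =>
        have h1 := (ih (a+b) (by omega) a b rfl).1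
        have h2 := (ih (a+b) (by omega) a b rfl).2
        rw [show a+(b+1)+1 = (a+b+1)+1 by omega, gbinom_succ, show (a+b+1)-b = a+1 by omega,
          show a+(b+1) = (a+b)+1 by omega]
        linear_combination q^(a+1) * h2 - q^(a+1) * h1

lemma absorb (a b : ℕ) :
    (q^(b+1) - 1) * gbinom (a+b+1) (b+1) = (q^(a+1) - 1) * gbinom (a+b+1) b := by
  rw [(L12 (a+b) a b rfl).1, (L12 (a+b) a b rfl).2]

lemma key (k r : ℕ) :
    q^(r+1) * gbinom (2*k+r+4) (2*k+2) + gbinom (2*k+r+2) (2*k+2)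
      = (1 + q^(2*k+r+3)) * gbinom (2*k+r+3) (2*k+2) + q^(2*r+3) * gbinom (2*k+r+2) (2*k) := by
  have h1 := gbinom_succ (2*k+r+3) (2*k+1)
  rw [show 2*k+r+3+1 = 2*k+r+4 by omega, show 2*k+1+1 = 2*k+2 by omega,
    show 2*k+r+3-(2*k+1) = r+2 by omega] at h1
  have h2 := gbinom_succ (2*k+r+2) (2*k+1)
  rw [show 2*k+r+2+1 = 2*k+r+3 by omega, show 2*k+1+1 = 2*k+2 by omega,
    show 2*k+r+2-(2*k+1) = r+1 by omega] at h2
  have h3 := gbinom_succ (2*k+r+2) (2*k)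
  rw [show 2*k+r+2+1 = 2*k+r+3 by omega, show 2*k+r+2-(2*k) = r+2 by omega] at h3
  have hA := absorb r (2*k+1)
  rw [show r+(2*k+1)+1 = 2*k+r+2 by omega, show 2*k+1+1 = 2*k+2 by omega] at hA
  have hB := absorb (r+1) (2*k)
  rw [show r+1+(2*k)+1 = 2*k+r+2 by omega] at hB
  linear_combination q^(r+1)*h1 + (q^(r+1)-1-q^(2*k+r+3))*h2 + q^(2*r+3)*h3
    - q^(r+1)*hA - q^(2*r+3)*hB

lemma qchoose1 (r : ℕ) : q ^ ((r+1).choose 2) = q ^ (r.choose 2) * q ^ r := by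
  rw [← pow_add, Nat.choose_succ_succ, Nat.choose_one_right, Nat.add_comm]

lemma qchoose2 (r : ℕ) : q ^ ((r+2).choose 2) = q ^ (r.choose 2) * q ^ (2*r+1) := by
  have h1 := qchoose1 (r+1)
  rw [show r+2 = r+1+1 by omega, h1, qchoose1, ← pow_add, ← pow_add, ← pow_add]
  congr 1; omega

def pp (k : ℕ) : R := ∏ j ∈ range k, (x ^ 2 + q ^ (2 * j + 1) * s)

def tm (n k : ℕ) : R :=
  q ^ Nat.choose (n - 2 * k) 2 * gbinom n (2 * k) * x ^ (n - 2 * k) * pp k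

def dd (n k : ℕ) : R :=
  q ^ (n - 2 * k) * q ^ Nat.choose (n - 2 * k) 2 * gbinom n (2 * k) * x ^ (n - 2 * k)

def DD (n : ℕ) : ℕ → R
  | 0 => 0
  | (k + 1) => dd n k * pp (k + 1)

lemma split (k r : ℕ) :
    q^(2*k+r+1) * s * tm (2*k+r) k = dd (2*k+r) k * pp (k+1) - dd (2*k+r) k * x^2 * pp k := by
  simp only [tm, dd, pp, prod_range_succ, show 2*k+r - 2*k = r by omega]
  ring

lemma tw0 (n : ℕ) :
    tm (n+2) 0 = (1 + q^(n+1)) * x * tm (n+1) 0 - dd n 0 * x^2 * pp 0 := by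
  simp only [tm, dd, Nat.mul_zero, Nat.sub_zero, gbinom_zero, qchoose1, qchoose2]
  ring

lemma twS (k r : ℕ) :
    tm (2*k+2+r+2) (k+1)
      = (1 + q^(2*k+2+r+1)) * x * tm (2*k+2+r+1) (k+1)
        - dd (2*k+2+r) (k+1) * x^2 * pp (k+1) + dd (2*k+2+r) k * pp (k+1) := by
  simp only [tm, dd]
  rw [show 2*k+2+r+2 - 2*(k+1) = r+2 by omega, show 2*k+2+r+1 - 2*(k+1) = r+1 by omega,
    show 2*k+2+r - 2*(k+1) = r by omega, show 2*k+2+r - 2*k = r+2 by omega,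
    show 2*(k+1) = 2*k+2 by omega, show 2*k+2+r+2 = 2*k+r+4 by omega,
    show 2*k+2+r+1 = 2*k+r+3 by omega, show 2*k+2+r = 2*k+r+2 by omega]
  simp only [qchoose2, qchoose1]
  linear_combination (q^(r.choose 2) * q^r * x^(r+2) * pp (k+1)) * key k r

lemma hterm_gen (n k : ℕ) (h : 2*k ≤ n) :
    (1 + q^(n+1)) * x * tm (n+1) k + q^(n+1) * s * tm n k
      = tm (n+2) k - DD n k + dd n k * pp (k+1) := by
  cases k with
  | zero =>
    have h1 := tw0 n
    have h2 := split 0 n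
    rw [show 2*0+n = n by omega] at h2
    simp only [DD]
    linear_combination h2 - h1
  | succ k' =>
    obtain ⟨r, rfl⟩ : ∃ r, n = 2*k'+2+r := ⟨n - (2*k'+2), by omega⟩
    have h1 := twS k' r
    have h2 := split (k'+1) r
    rw [show 2*(k'+1)+r = 2*k'+2+r by omega] at h2
    simp only [DD]
    linear_combination h2 - h1

lemma bE (N : ℕ) : tm (2*N+2) (N+1) = DD (2*N) (N+1) := by
  simp only [tm, DD, dd]
  rw [show 2*N+2 - 2*(N+1) = 0 by omega, show 2*N - 2*N = 0 by omega,
    show 2*(N+1) = 2*N+2 by omega, gbinom_self, gbinom_self]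
  ring

lemma bO (N : ℕ) :
    tm (2*N+1+2) (N+1) = (1 + q^(2*N+1+1)) * x * tm (2*N+1+1) (N+1) + DD (2*N+1) (N+1) := by
  simp only [tm, DD, dd]
  rw [show 2*N+1+2 - 2*(N+1) = 1 by omega, show 2*N+1+1 - 2*(N+1) = 0 by omega,
    show 2*N+1 - 2*N = 1 by omega, show 2*(N+1) = 2*N+2 by omega, gbinom_self]
  have p1 := gbinom_succ (2*N+2) (2*N+1)
  rw [show 2*N+2+1 = 2*N+1+2 by omega, show 2*N+1+1 = 2*N+2 by omega,
    show 2*N+2-(2*N+1) = 1 by omega, gbinom_self] at p1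
  have p2 := gbinom_succ (2*N+1) (2*N)
  rw [show 2*N+1+1 = 2*N+2 by omega, show 2*N+1-(2*N) = 1 by omega, gbinom_self] at p2
  have hq := (L12 (0+2*N) 0 (2*N) rfl).2
  rw [show 0+2*N+1 = 2*N+1 by omega, show 0+2*N = 2*N by omega, gbinom_self] at hq
  rw [p1, p2]
  have e1 : (1:ℕ).choose 2 = 0 := rfl
  have e0 : (0:ℕ).choose 2 = 0 := rfl
  rw [e1, e0]
  linear_combination (q * x * pp (N+1)) * hq

lemma stepE (N : ℕ) :
    ∑ k ∈ range (N+2), tm (2*N+2) k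
      = (1 + q^(2*N+1)) * x * ∑ k ∈ range (N+1), tm (2*N+1) k
        + q^(2*N+1) * s * ∑ k ∈ range (N+1), tm (2*N) k := by
  have hterm : ∑ k ∈ range (N+1), ((1 + q^(2*N+1)) * x * tm (2*N+1) k
        + q^(2*N+1) * s * tm (2*N) k)
      = ∑ k ∈ range (N+1), (tm (2*N+2) k - DD (2*N) k + dd (2*N) k * pp (k+1)) :=
    Finset.sum_congr rfl (fun k hk => hterm_gen (2*N) k (by simp at hk; omega))
  rw [Finset.sum_add_distrib, Finset.sum_add_distrib, Finset.sum_sub_distrib,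
    ← Finset.mul_sum, ← Finset.mul_sum] at hterm
  have hDD2 : ∑ k ∈ range (N+1), DD (2*N) k + DD (2*N) (N+1)
      = ∑ k ∈ range (N+1), dd (2*N) k * pp (k+1) := by
    rw [← Finset.sum_range_succ, Finset.sum_range_succ']; simp [DD]
  rw [Finset.sum_range_succ (tm (2*N+2)) (N+1), bE N]
  linear_combination - hterm + hDD2

lemma stepO (N : ℕ) :
    ∑ k ∈ range (N+2), tm (2*N+1+2) k
      = (1 + q^(2*N+1+1)) * x * ∑ k ∈ range (N+2), tm (2*N+1+1) k
        + q^(2*N+1+1) * s * ∑ k ∈ range (N+1), tm (2*N+1) k := by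
  have hterm : ∑ k ∈ range (N+1), ((1 + q^(2*N+1+1)) * x * tm (2*N+1+1) k
        + q^(2*N+1+1) * s * tm (2*N+1) k)
      = ∑ k ∈ range (N+1), (tm (2*N+1+2) k - DD (2*N+1) k + dd (2*N+1) k * pp (k+1)) :=
    Finset.sum_congr rfl (fun k hk => hterm_gen (2*N+1) k (by simp at hk; omega))
  rw [Finset.sum_add_distrib, Finset.sum_add_distrib, Finset.sum_sub_distrib,
    ← Finset.mul_sum, ← Finset.mul_sum] at hterm
  have hDD2 : ∑ k ∈ range (N+1), DD (2*N+1) k + DD (2*N+1) (N+1)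
      = ∑ k ∈ range (N+1), dd (2*N+1) k * pp (k+1) := by
    rw [← Finset.sum_range_succ, Finset.sum_range_succ']; simp [DD]
  rw [Finset.sum_range_succ (tm (2*N+1+2)) (N+1), bO N,
    Finset.sum_range_succ (tm (2*N+1+1)) (N+1)]
  linear_combination - hterm + hDD2

/-- Binet-type formula for the q-Chebyshev polynomials of the first kind. -/
theorem chebT_binet (n : ℕ) :
    chebT n = ∑ k ∈ range (n / 2 + 1),
      q ^ Nat.choose (n - 2 * k) 2 * gbinom n (2 * k) * x ^ (n - 2 * k) *
        ∏ j ∈ range k, (x ^ 2 + q ^ (2 * j + 1) * s) := by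
  suffices H : ∀ n, chebT n = ∑ k ∈ range (n / 2 + 1), tm n k by
    simpa only [tm, pp] using H n
  intro n
  induction n using Nat.strong_induction_on with
  | _ n ih =>
    match n with
    | 0 => simp [chebT, tm, pp, gbinom_zero]
    | 1 => norm_num [chebT, tm, pp, gbinom_zero]
    | (n+2) =>
      rw [chebT, ih n (by omega), ih (n+1) (by omega)]
      rcases Nat.even_or_odd' n with ⟨N, rfl | rfl⟩
      · rw [show (2*N+2)/2 + 1 = N+2 by omega, show (2*N+1)/2 + 1 = N+1 by omega,
          show (2*N)/2 + 1 = N+1 by omega]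
        exact (stepE N).symm
      · rw [show (2*N+1+2)/2 + 1 = N+2 by omega, show (2*N+1+1)/2 + 1 = N+2 by omega,
          show (2*N+1)/2 + 1 = N+1 by omega]
        exact (stepO N).symm

end
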